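/- Let d be an odd divisor of 2h+1 and q₀ = 2^h. Then Σ_{x ∈ 𝔽_{2^d}} (-1)^{Tr_{𝔽_{2^d}/𝔽₂}(x^{q₀+1})} = 0. -/

import Mathlib

noncomputable instance (n : ℕ) : Fintype (GaloisField 2 n) := Fintype.ofFinite _

private lemma suzuki_copr (h d : ℕ) (hdvd : d ∣ 2 * h + 1) :
    Nat.Coprime (2 ^ h + 1) (2 ^ d - 1) := by
  by_contra hc
  obtain ⟨p, hp, hp1, hp2⟩ := Nat.Prime.not_coprime_iff_dvd.mp hc
  have hd1 : (1:ℕ) ≤ 2 ^ d := Nat.one_le_two_pow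
  haveI : Fact p.Prime := ⟨hp⟩
  have h1 : (2 : ZMod p) ^ h = -1 := by
    have : ((2 ^ h + 1 : ℕ) : ZMod p) = 0 := (ZMod.natCast_eq_zero_iff _ _).mpr hp1
    push_cast at this; linear_combination this
  have h2 : (2 : ZMod p) ^ d = 1 := by
    have : ((2 ^ d - 1 : ℕ) : ZMod p) = 0 := (ZMod.natCast_eq_zero_iff _ _).mpr hp2
    rw [Nat.cast_sub hd1] at this; push_cast at this; linear_combination this
  have h3 : (2 : ZMod p) ^ (2 * h) = 1 := by
    rw [two_mul, pow_add, h1]; ring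
  have hord1 : orderOf (2 : ZMod p) ∣ 2 * h := orderOf_dvd_of_pow_eq_one h3
  have hord2 : orderOf (2 : ZMod p) ∣ d := orderOf_dvd_of_pow_eq_one h2
  have hg : Nat.gcd d (2 * h) = 1 := by
    have h5 : Nat.gcd d (2*h) ∣ 2 * h + 1 := (Nat.gcd_dvd_left _ _).trans hdvd
    have h6 : Nat.gcd d (2*h) ∣ 2 * h := Nat.gcd_dvd_right _ _
    have := Nat.dvd_sub h5 h6
    simpa using this
  have : orderOf (2 : ZMod p) = 1 := Nat.dvd_one.mp (by have := Nat.dvd_gcd hord2 hord1; rw [hg] at this; exact this)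
  have h21 : (2 : ZMod p) = 1 := orderOf_eq_one_iff.mp this
  have : ((1:ℕ) : ZMod p) = 0 := by push_cast; linear_combination h21
  have := (ZMod.natCast_eq_zero_iff _ _).mp this
  exact hp.one_lt.ne' (Nat.dvd_one.mp this)

private lemma suzuki_pow_bij {F : Type*} [Field F] [Fintype F] {n : ℕ} (hn0 : n ≠ 0)
    (hn : n.Coprime (Fintype.card F - 1)) : Function.Bijective (fun x : F => x ^ n) := by
  rw [Finite.injective_iff_bijective.symm]
  intro x y hxy
  simp only at hxy
  rcases eq_or_ne y 0 with hy | hy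
  · subst hy
    rw [zero_pow hn0, pow_eq_zero_iff hn0] at hxy
    exact hxy
  rcases eq_or_ne x 0 with hx | hx
  · subst hx
    rw [zero_pow hn0] at hxy
    exact ((hy ((pow_eq_zero_iff hn0).mp hxy.symm)).elim)
  have hq : (x / y) ^ n = 1 := by
    rw [div_pow, hxy, div_self (pow_ne_zero _ hy)]
  have h1 : orderOf (x / y) ∣ n := orderOf_dvd_of_pow_eq_one hq
  have h2 : orderOf (x / y) ∣ Fintype.card F - 1 :=
    orderOf_dvd_of_pow_eq_one (FiniteField.pow_card_sub_one_eq_one _ (div_ne_zero hx hy))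
  have : orderOf (x / y) = 1 := Nat.dvd_one.mp (hn ▸ Nat.dvd_gcd h1 h2)
  have := orderOf_eq_one_iff.mp this
  field_simp at this
  exact this

/-- For `d` an odd divisor of `2h+1` and `q₀ = 2^h`,
`∑_{x ∈ 𝔽_{2^d}} (-1)^{Tr(x^{q₀+1})} = 0`. -/
theorem suzuki_first_sum_vanishes (h d : ℕ) (hd : Odd d) (hdvd : d ∣ 2 * h + 1) :
    ∑ x : GaloisField 2 d,
        (-1 : ℤ) ^ (Algebra.trace (ZMod 2) (GaloisField 2 d) (x ^ (2 ^ h + 1))).val = 0 := by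
  have hd0 : d ≠ 0 := by rintro rfl; simp [Nat.odd_iff] at hd
  set F := GaloisField 2 d with hF
  have hcard : Fintype.card F = 2 ^ d := by
    rw [← Nat.card_eq_fintype_card]; exact GaloisField.card 2 d hd0
  set T := Algebra.trace (ZMod 2) F with hT
  set f : F → ℤ := fun x => (-1 : ℤ) ^ (T x).val with hf
  -- Step 1: x ↦ x^(2^h+1) is a bijection
  have hbij : Function.Bijective (fun x : F => x ^ (2 ^ h + 1)) := by
    apply suzuki_pow_bij (by positivity)
    rw [hcard]
    exact suzuki_copr h d hdvd
  have step1 : ∑ x : F, f (x ^ (2 ^ h + 1)) = ∑ x : F, f x :=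
    Function.Bijective.sum_comp hbij f
  rw [show (∑ x : F, (-1:ℤ) ^ (T (x ^ (2 ^ h + 1))).val) = ∑ x : F, f (x ^ (2 ^ h + 1)) from rfl,
    step1]
  -- Step 2: the trace is surjective; pick c with T c = 1
  obtain ⟨c, hc⟩ := Algebra.trace_surjective (ZMod 2) F (1 : ZMod 2)
  have key : ∀ a : ZMod 2, (-1 : ℤ) ^ (a + 1).val = -(-1 : ℤ) ^ a.val := by decide
  have step2 : ∑ x : F, f (x + c) = ∑ x : F, f x :=
    Function.Bijective.sum_comp (Equiv.addRight c).bijective f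
  have step3 : ∑ x : F, f (x + c) = -∑ x : F, f x := by
    rw [← Finset.sum_neg_distrib]
    apply Finset.sum_congr rfl
    intro x _
    simp only [hf, map_add, hc]
    have hc' : T c = 1 := hc
    rw [hc']
    exact key (T x)
  linarith [step2, step3]
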